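/- Consider the Interaction 4 guiding system F : ℝ² → ℝ², F(Σ,Ω) = ((3/2)·Σ·(−γ(Σ²+Ω²−1)+2Σ²+Ω²−2), (1/2)·Ω·(Γ̄ − 3γ(Σ²+Ω²−1) + 6Σ² + 3Ω² − 3)), with parameters γ and Γ̄ satisfying 1 < γ ≤ 2 and −3(γ−1) < Γ̄ ≤ 0. Set Ω₆ := √(1 + Γ̄/(3(γ−1))). Then (0,Ω₆) is an equilibrium point of F, the Jacobian matrix of F at (0,Ω₆) is the diagonal matrix with diagonal entries −(Γ̄+3)/2 and −Γ̄ − 3γ + 3, and under the stated hypotheses both entries are negative, so (0,Ω₆) is a hyperbolic sink. -/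

import Mathlib

/-- Interaction 4 guiding system: for `1 < γ ≤ 2` and `−3(γ−1) < Γ̄ ≤ 0`, the point
`P₆ = (0, √(1 + Γ̄/(3(γ−1))))` is an equilibrium, its Jacobian is
`diag(−(Γ̄+3)/2, −Γ̄−3γ+3)`, and both eigenvalues are negative, so it is a
hyperbolic sink. -/
theorem interaction4_P6_sink
    (γ Γ : ℝ) (hγ1 : 1 < γ) (hγ2 : γ ≤ 2)
    (hΓlo : -3 * (γ - 1) < Γ) (hΓhi : Γ ≤ 0)
    (Ω₆ : ℝ) (hΩ₆ : Ω₆ = Real.sqrt (1 + Γ / (3 * (γ - 1))))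
    (F : ℝ × ℝ → ℝ × ℝ)
    (hF : ∀ p : ℝ × ℝ, F p =
      ((3 / 2) * p.1 * (-γ * (p.1 ^ 2 + p.2 ^ 2 - 1) + 2 * p.1 ^ 2 + p.2 ^ 2 - 2),
       (1 / 2) * p.2 * (Γ - 3 * γ * (p.1 ^ 2 + p.2 ^ 2 - 1)
         + 6 * p.1 ^ 2 + 3 * p.2 ^ 2 - 3))) :
    F (0, Ω₆) = (0, 0) ∧
    HasFDerivAt F
      (((-(Γ + 3) / 2) • ContinuousLinearMap.id ℝ ℝ).prodMap
        ((-Γ - 3 * γ + 3) • ContinuousLinearMap.id ℝ ℝ)) (0, Ω₆) ∧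
    -(Γ + 3) / 2 < 0 ∧ -Γ - 3 * γ + 3 < 0 := by
  have hγ : (0:ℝ) < 3 * (γ - 1) := by nlinarith
  have hnn : (0:ℝ) ≤ 1 + Γ / (3 * (γ - 1)) := by
    have : -1 < Γ / (3 * (γ - 1)) := by
      rw [lt_div_iff₀ hγ]; nlinarith
    linarith
  have hs : Ω₆ ^ 2 = 1 + Γ / (3 * (γ - 1)) := by
    rw [hΩ₆, Real.sq_sqrt hnn]
  have hΩs : 3 * (γ - 1) * Ω₆ ^ 2 = 3 * (γ - 1) + Γ := by
    rw [hs, mul_add, mul_one, mul_div_cancel₀ Γ hγ.ne']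
  have hFe : F = fun p : ℝ × ℝ =>
      ((3 / 2) * p.1 * (-γ * (p.1 ^ 2 + p.2 ^ 2 - 1) + 2 * p.1 ^ 2 + p.2 ^ 2 - 2),
       (1 / 2) * p.2 * (Γ - 3 * γ * (p.1 ^ 2 + p.2 ^ 2 - 1)
         + 6 * p.1 ^ 2 + 3 * p.2 ^ 2 - 3)) := funext hF
  refine ⟨?_, ?_, by nlinarith, by nlinarith⟩
  · rw [hF]
    have h2 : Γ - 3 * γ * ((0:ℝ) ^ 2 + Ω₆ ^ 2 - 1) + 6 * (0:ℝ) ^ 2 + 3 * Ω₆ ^ 2 - 3 = 0 := by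
      nlinarith [hΩs]
    refine Prod.ext (by simp) ?_
    simp only []
    rw [h2]; ring
  · have hFe2 : F = fun p : ℝ × ℝ =>
        ((3 / 2) * p.1 * (-γ * (p.1 * p.1 + p.2 * p.2 - 1) + 2 * (p.1 * p.1) + p.2 * p.2 - 2),
         (1 / 2) * p.2 * (Γ + -(3 * γ) * (p.1 * p.1 + p.2 * p.2 - 1)
           + 6 * (p.1 * p.1) + 3 * (p.2 * p.2) - 3)) := by
      funext p; rw [hF]; refine Prod.ext ?_ ?_ <;> (simp only []; ring)
    rw [hFe2]
    set P : ℝ × ℝ := (0, Ω₆) with hP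
    have hfst : HasFDerivAt (fun p : ℝ × ℝ => p.1) (ContinuousLinearMap.fst ℝ ℝ ℝ) P :=
      hasFDerivAt_fst
    have hsnd : HasFDerivAt (fun p : ℝ × ℝ => p.2) (ContinuousLinearMap.snd ℝ ℝ ℝ) P :=
      hasFDerivAt_snd
    have hx2 := hfst.mul hfst
    have hy2 := hsnd.mul hsnd
    have hB1 := ((((hx2.add hy2).sub_const 1).const_mul (-γ)).add (hx2.const_mul 2)).add hy2
    have hB := hB1.sub_const 2
    have h1 := (hfst.const_mul (3/2 : ℝ)).mul hB
    have hC1 := ((((hx2.add hy2).sub_const 1).const_mul (-(3*γ))).const_add Γ).add (hx2.const_mul 6)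
    have hC := (hC1.add (hy2.const_mul 3)).sub_const 3
    have h2 := (hsnd.const_mul (1/2 : ℝ)).mul hC
    have H := h1.prodMk h2
    refine H.congr_fderiv ?_
    apply ContinuousLinearMap.ext; intro v
    refine Prod.ext ?_ ?_ <;>
    · simp only [ContinuousLinearMap.coe_prodMap', ContinuousLinearMap.prod_apply,
        ContinuousLinearMap.smul_apply, ContinuousLinearMap.id_apply,
        ContinuousLinearMap.add_apply, ContinuousLinearMap.coe_fst',
        ContinuousLinearMap.coe_snd', smul_eq_mul, ContinuousLinearMap.coe_smul',
        Pi.smul_apply, Prod.map_fst, Prod.map_snd, hP, Pi.add_apply, Pi.mul_apply]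
      first
      | linear_combination (v.1 / 2) * hΩs
      | linear_combination (-(v.1) / 2) * hΩs
      | linear_combination (-(3:ℝ)/2 * v.2) * hΩs
      | linear_combination ((3:ℝ)/2 * v.2) * hΩs
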